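/- arXiv:2301.01136 — 2 statements merged into one kernel-verified Lean document; each statement's English description precedes it below -/
import Mathlib

section
/- Under the hypotheses of the state estimate, suppose in addition that for each q_ε ∈ L²(O_ε*) there exists g_ε ∈ H¹_{Γ₀}(O_ε*)ⁿ with div g_ε = q_ε and ‖∇g_ε‖_{L²} ≤ C₀‖q_ε‖_{L²} (uniform Bogovskii-type estimate). Then the pressure p_ε in the weak Stokes formulation satisfies ‖p_ε‖_{L²(O_ε*)} ≤ C₀( m₂‖∇u_ε‖_{L²} + C‖θ_ε‖_{L²} ), where m₂ is the upper ellipticity constant and C is the Poincaré constant. -/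
open scoped InnerProductSpace

/-- Abstract formulation of the pressure estimate (5.5).
`V` plays the role of `H¹_{Γ₀}(O_ε*)ⁿ`, `W` of `L²(O_ε*)ⁿ`, `X` of `L²(O_ε*)^{n×n}`
(gradients) and `Q` of `L²(O_ε*)` (pressures); `ι` is the embedding, `G` the gradient,
`d` the divergence, `Aop` multiplication by the uniformly elliptic matrix `A_ε`. -/
theorem stmt_4 {V W X Q : Type*}
    [NormedAddCommGroup V] [InnerProductSpace ℝ V]
    [NormedAddCommGroup W] [InnerProductSpace ℝ W]
    [NormedAddCommGroup X] [InnerProductSpace ℝ X]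
    [NormedAddCommGroup Q] [InnerProductSpace ℝ Q]
    (ι : V →L[ℝ] W) (G : V →L[ℝ] X) (d : V →L[ℝ] Q) (Aop : X →L[ℝ] X)
    (uε : V) (pε : Q) (θε : W) (C C₀ m₂ : ℝ)
    (hC : 0 < C) (hC₀ : 0 < C₀) (hm₂ : 0 < m₂)
    -- Poincaré inequality with constant independent of ε
    (hPoin : ∀ v : V, ‖ι v‖ ≤ C * ‖G v‖)
    -- upper ellipticity bound of A_ε
    (hup : ∀ ξ : X, ‖Aop ξ‖ ≤ m₂ * ‖ξ‖)
    -- uniform Bogovskii-type estimate: div G is onto with uniform bound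
    (hBog : ∀ q : Q, ∃ g : V, d g = q ∧ ‖G g‖ ≤ C₀ * ‖q‖)
    -- weak Stokes formulation: ∫ A_ε∇u_ε:∇φ − ∫ p_ε div φ = ∫ θ_ε·φ for all φ
    (heq : ∀ φ : V, ⟪Aop (G uε), G φ⟫_ℝ - ⟪pε, d φ⟫_ℝ = ⟪θε, ι φ⟫_ℝ)
    (hdiv : d uε = 0) :
    ‖pε‖ ≤ C₀ * (m₂ * ‖G uε‖ + C * ‖θε‖) := by
  obtain ⟨g, hg, hGg⟩ := hBog pε
  have h1 : ⟪pε, pε⟫_ℝ = ⟪Aop (G uε), G g⟫_ℝ - ⟪θε, ι g⟫_ℝ := by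
    have := heq g
    rw [hg] at this
    linarith
  have hsq : ‖pε‖ ^ 2 ≤ (m₂ * ‖G uε‖ + C * ‖θε‖) * (C₀ * ‖pε‖) := by
    have h2 : ‖pε‖ ^ 2 = ⟪pε, pε⟫_ℝ := (real_inner_self_eq_norm_sq pε).symm
    rw [h2, h1]
    have b1 : ⟪Aop (G uε), G g⟫_ℝ ≤ m₂ * ‖G uε‖ * ‖G g‖ :=
      (real_inner_le_norm _ _).trans (by
        have := hup (G uε)
        nlinarith [norm_nonneg (G g), norm_nonneg (Aop (G uε))])
    have b2 : -⟪θε, ι g⟫_ℝ ≤ ‖θε‖ * (C * ‖G g‖) := by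
      have := (abs_real_inner_le_norm θε (ι g))
      have h3 := hPoin g
      nlinarith [norm_nonneg θε, abs_nonneg (⟪θε, ι g⟫_ℝ), neg_abs_le (⟪θε, ι g⟫_ℝ)]
    have hGg' : ‖G g‖ ≤ C₀ * ‖pε‖ := hGg
    nlinarith [mul_le_mul_of_nonneg_left hGg (by positivity : (0:ℝ) ≤ m₂ * ‖G uε‖),
      mul_le_mul_of_nonneg_left hGg (by positivity : (0:ℝ) ≤ C * ‖θε‖)]
  rcases eq_or_lt_of_le (norm_nonneg pε) with h | h
  · rw [← h]; positivity
  · have := mul_le_mul_iff_of_pos_right h |>.mp (by nlinarith : ‖pε‖ * ‖pε‖ ≤ (C₀ * (m₂ * ‖G uε‖ + C * ‖θε‖)) * ‖pε‖)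
    exact this
end

section
/- Taking the test function y = (y₁,…,yₙ) in the weak formulation of the cell problem for (χ_j^β, Π_j^β) yields Σ_{i,l,k,α} ∫_{W*} a_{lk} ∂/∂y_k(P_j^β − χ_j^β)_i · ∂P_i^α/∂y_l · ∂y_i/∂y_α dy = n ∫_{W*} Π_j^β dy; consequently the mean of the pressure corrector satisfies M_{W*}(Π_j^β) = (1/n) Σ_{i,α} a_{ij}^{αβ} δ_{iα}, where a_{ij}^{αβ} = (1/|W*|)∫_{W*} A(y)∇_y(P_j^β − χ_j^β) : ∇_y P_i^α dy. -/
open MeasureTheory Filter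

noncomputable section

/-- The reference cell `W = (0,1)ⁿ`. -/
def Wcell (n : ℕ) : Set (Fin n → ℝ) := Set.univ.pi fun _ => Set.Ioo (0 : ℝ) 1

/-- The perforated reference cell `W* = W \ Y`. -/
def Wstar (n : ℕ) (Y : Set (Fin n → ℝ)) : Set (Fin n → ℝ) := Wcell n \ Y

/-- Frobenius product `M : N = Σ_{i,j} M i j * N i j`. -/
def mdot {n : ℕ} (M N : Matrix (Fin n) (Fin n) ℝ) : ℝ := ∑ i, ∑ j, M i j * N i j

/-- Squared Frobenius norm. -/
def mnormSq {n : ℕ} (M : Matrix (Fin n) (Fin n) ℝ) : ℝ := ∑ i, ∑ j, (M i j) ^ 2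

/-- Diagonal action of a matrix `A` on a gradient matrix `M` (rows = components):
`(A∇u)_{k i} = Σ_j a_{ij} ∂_j u_k`, with `M k j = ∂_j u_k`. -/
def Aact {n : ℕ} (A M : Matrix (Fin n) (Fin n) ℝ) : Matrix (Fin n) (Fin n) ℝ :=
  Matrix.of fun k i => ∑ j, A i j * M k j

/-- Gradient of `P_j^β(y) = (0,…,y_j,…,0)` (with `y_j` in position `β`):
the constant matrix with entry `1` at `(β, j)`. -/
def gradP (n : ℕ) (j β : Fin n) : Matrix (Fin n) (Fin n) ℝ :=
  Matrix.single β j 1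

end

lemma mdot_sum {n : ℕ} (M : Matrix (Fin n) (Fin n) ℝ)
    (f : Fin n → Matrix (Fin n) (Fin n) ℝ) :
    mdot M (∑ k, f k) = ∑ k, mdot M (f k) := by
  simp only [mdot, Matrix.sum_apply, Finset.mul_sum]
  trans ∑ i, ∑ k, ∑ l, M i l * f k i l
  · exact Finset.sum_congr rfl fun i _ => Finset.sum_comm
  · exact Finset.sum_comm

lemma sum_gradP_diag (n : ℕ) : (∑ i, gradP n i i) = (1 : Matrix (Fin n) (Fin n) ℝ) := by
  ext k l
  simp only [Matrix.sum_apply, gradP, Matrix.single, Matrix.of_apply]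
  by_cases h : k = l
  · subst h
    simp
  · rw [Matrix.one_apply_ne h, Finset.sum_eq_zero]
    intro i _
    rw [if_neg]
    rintro ⟨rfl, rfl⟩
    exact h rfl

theorem stmt_15 (n : ℕ) (hn : 0 < n) (Y : Set (Fin n → ℝ))
    (A : (Fin n → ℝ) → Matrix (Fin n) (Fin n) ℝ)
    (gradχ : Fin n → Fin n → (Fin n → ℝ) → Matrix (Fin n) (Fin n) ℝ)  -- ∇_y χ_j^β
    (Pp : Fin n → Fin n → (Fin n → ℝ) → ℝ)                            -- Π_j^β
    (j β : Fin n)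
    -- class of admissible (gradients of) test functions for the cell problem;
    -- the function y ↦ y has gradient the identity matrix and is admissible
    (CellTest : ((Fin n → ℝ) → Matrix (Fin n) (Fin n) ℝ) → Prop)
    (hId : CellTest (fun _ => (1 : Matrix (Fin n) (Fin n) ℝ)))
    -- weak formulation of the cell problem (6.3)
    (hweak : ∀ gv, CellTest gv →
      (∫ y in Wstar n Y, mdot (Aact (A y) (gradP n j β - gradχ j β y)) (gv y))
        = ∫ y in Wstar n Y, Pp j β y * Matrix.trace (gv y))
    (hint : ∀ i α : Fin n, IntegrableOn (fun y =>
      mdot (Aact (A y) (gradP n j β - gradχ j β y)) (gradP n i α)) (Wstar n Y)) :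
    -- identity (7.23a) obtained with the test function y ↦ y
    ((∫ y in Wstar n Y,
        mdot (Aact (A y) (gradP n j β - gradχ j β y)) (1 : Matrix (Fin n) (Fin n) ℝ))
      = (n : ℝ) * ∫ y in Wstar n Y, Pp j β y)
    -- consequently: M_{W*}(Π_j^β) = (1/n) Σ_{i,α} a_{ij}^{αβ} δ_{iα}
    ∧ ((volume (Wstar n Y)).toReal⁻¹ * (∫ y in Wstar n Y, Pp j β y)
      = (1 / (n : ℝ)) * ∑ i, ∑ α,
          ((volume (Wstar n Y)).toReal⁻¹ *
            ∫ y in Wstar n Y, mdot (Aact (A y) (gradP n j β - gradχ j β y)) (gradP n i α))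
          * (if i = α then (1 : ℝ) else 0)) := by
  have h1 : (∫ y in Wstar n Y,
      mdot (Aact (A y) (gradP n j β - gradχ j β y)) (1 : Matrix (Fin n) (Fin n) ℝ))
      = (n : ℝ) * ∫ y in Wstar n Y, Pp j β y := by
    have := hweak _ hId
    simp only [Matrix.trace_one, Fintype.card_fin] at this
    rw [MeasureTheory.integral_mul_const, mul_comm] at this
    exact this
  refine ⟨h1, ?_⟩
  have hsum : ∑ i, (∫ y in Wstar n Y,
      mdot (Aact (A y) (gradP n j β - gradχ j β y)) (gradP n i i))
      = (n : ℝ) * ∫ y in Wstar n Y, Pp j β y := by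
    rw [← h1]
    rw [← integral_finset_sum _ (fun i _ => hint i i)]
    congr 1; ext y
    rw [← mdot_sum, sum_gradP_diag]
  have hn' : (n : ℝ) ≠ 0 := Nat.cast_ne_zero.mpr hn.ne'
  simp only [mul_ite, mul_one, mul_zero, Finset.sum_ite_eq, Finset.mem_univ, if_true]
  rw [← Finset.mul_sum, hsum]
  field_simp
end
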